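/- arXiv:2110.12020 — 7 statements merged into one kernel-verified Lean document; each statement's English description precedes it below -/
import Mathlib

section
/- Let V be a finite ground set and f a function from subsets of V to the nonnegative reals that is monotone (S ⊆ T implies f(S) ≤ f(T)), submodular (for all S ⊆ T ⊆ V and x ∈ V \ T, f(S ∪ {x}) − f(S) ≥ f(T ∪ {x}) − f(T)), and satisfies f(∅) = 0. Let G_0 = ∅ and for each i, G_i = G_{i−1} ∪ {x_i} where x_i ∈ V maximizes the marginal gain f(G_{i−1} ∪ {x}) − f(G_{i−1}) over x ∈ V. Then for every subset OPT ⊆ V with |OPT| ≤ k, one has f(G_k) ≥ (1 − 1/e)·f(OPT). -/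
/-- **Greedy submodular maximization guarantee (Nemhauser et al.).**
Let `V` be a finite ground set and `f` a monotone, submodular, nonnegative function on
subsets of `V` with `f ∅ = 0`.  If `G` is a greedy sequence (starting from `∅`, each step
inserting an element of `V` of maximal marginal gain), then for every `OPT ⊆ V` with
`|OPT| ≤ k` we have `f (G k) ≥ (1 - 1/e)·f OPT`. -/
theorem greedy_one_sub_inv_e_approx
    {α : Type*} [DecidableEq α] (V : Finset α) (f : Finset α → ℝ)
    (hnonneg : ∀ S : Finset α, S ⊆ V → 0 ≤ f S)
    (hmono : ∀ S T : Finset α, S ⊆ T → T ⊆ V → f S ≤ f T)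
    (hsubmod : ∀ S T : Finset α, S ⊆ T → T ⊆ V → ∀ x ∈ V, x ∉ T →
      f (insert x T) - f T ≤ f (insert x S) - f S)
    (hempty : f ∅ = 0)
    (G : ℕ → Finset α)
    (hG0 : G 0 = ∅)
    (hGstep : ∀ i : ℕ, ∃ x ∈ V, G (i + 1) = insert x (G i) ∧
      ∀ y ∈ V, f (insert y (G i)) - f (G i) ≤ f (insert x (G i)) - f (G i))
    (k : ℕ) (OPT : Finset α) (hOPT : OPT ⊆ V) (hcard : OPT.card ≤ k) :
    (1 - 1 / Real.exp 1) * f OPT ≤ f (G k) := by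
  classical
  -- subadditivity-style bound: f (S ∪ T) ≤ f S + ∑ marginal gains
  have key : ∀ T : Finset α, T ⊆ V → ∀ S : Finset α, S ⊆ V →
      f (S ∪ T) ≤ f S + ∑ x ∈ T, (f (insert x S) - f S) := by
    intro T
    induction T using Finset.induction_on with
    | empty => intro _ S hS; simp
    | @insert a T' ha ih =>
      intro hT S hS
      have haV : a ∈ V := hT (Finset.mem_insert_self _ _)
      have hT'V : T' ⊆ V := (Finset.subset_insert _ _).trans hT
      rw [Finset.sum_insert ha]
      have h1 : f (S ∪ insert a T') ≤ f (S ∪ T') + (f (insert a S) - f S) := by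
        by_cases hmem : a ∈ S ∪ T'
        · have haS : a ∈ S := by
            rcases Finset.mem_union.mp hmem with h | h
            · exact h
            · exact absurd h ha
          have h2 : insert a S = S := Finset.insert_eq_self.mpr haS
          have h3 : S ∪ insert a T' = S ∪ T' := by
            rw [Finset.union_insert, Finset.insert_eq_self.mpr hmem]
          rw [h2, h3]; linarith
        · have := hsubmod S (S ∪ T') Finset.subset_union_left
            (Finset.union_subset hS hT'V) a haV hmem
          rw [Finset.union_insert]
          linarith
      have h2 := ih hT'V S hS
      linarith
  have hGV : ∀ i, G i ⊆ V := by
    intro i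
    induction i with
    | zero => rw [hG0]; exact Finset.empty_subset _
    | succ n ihn =>
      obtain ⟨x, hxV, hGeq, _⟩ := hGstep n
      rw [hGeq]
      exact Finset.insert_subset hxV ihn
  have hfOPT : 0 ≤ f OPT := hnonneg OPT hOPT
  rcases Nat.eq_zero_or_pos k with hk0 | hkpos
  · subst hk0
    have : OPT = ∅ := Finset.card_eq_zero.mp (Nat.le_zero.mp hcard)
    rw [this, hempty, hG0, hempty]
    simp
  · have hk1 : (1:ℝ) ≤ (k:ℝ) := by exact_mod_cast hkpos
    have hkR : (0:ℝ) < (k:ℝ) := by linarith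
    have hbase : (0:ℝ) ≤ 1 - 1 / (k:ℝ) := by
      have : 1 / (k:ℝ) ≤ 1 := by
        rw [div_le_one hkR]; exact hk1
      linarith
    have main : ∀ i, f OPT - f (G i) ≤ (1 - 1/(k:ℝ))^i * f OPT := by
      intro i
      induction i with
      | zero => rw [hG0, hempty]; simp
      | succ n ihn =>
        obtain ⟨x, hxV, hGeq, hmax⟩ := hGstep n
        have hgain0 : 0 ≤ f (G (n+1)) - f (G n) := by
          have := hmono (G n) (G (n+1)) (by rw [hGeq]; exact Finset.subset_insert _ _)
            (hGV (n+1))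
          linarith
        have hsum : ∑ y ∈ OPT, (f (insert y (G n)) - f (G n))
            ≤ (OPT.card : ℝ) * (f (G (n+1)) - f (G n)) := by
          rw [hGeq]
          calc ∑ y ∈ OPT, (f (insert y (G n)) - f (G n))
              ≤ ∑ _y ∈ OPT, (f (insert x (G n)) - f (G n)) :=
                Finset.sum_le_sum (fun y hy => hmax y (hOPT hy))
            _ = (OPT.card : ℝ) * (f (insert x (G n)) - f (G n)) := by
                rw [Finset.sum_const, nsmul_eq_mul]
        have hOPTb : f OPT ≤ f (G n) + (k:ℝ) * (f (G (n+1)) - f (G n)) := by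
          have h1 : f OPT ≤ f (G n ∪ OPT) :=
            hmono OPT (G n ∪ OPT) Finset.subset_union_right
              (Finset.union_subset (hGV n) hOPT)
          have h2 := key OPT hOPT (G n) (hGV n)
          have h3 : (OPT.card : ℝ) * (f (G (n+1)) - f (G n))
              ≤ (k:ℝ) * (f (G (n+1)) - f (G n)) :=
            mul_le_mul_of_nonneg_right (by exact_mod_cast hcard) hgain0
          linarith
        have hdelta : f OPT - f (G (n+1)) ≤ (1 - 1/(k:ℝ)) * (f OPT - f (G n)) := by
          have h4 : (f OPT - f (G n)) / (k:ℝ) ≤ f (G (n+1)) - f (G n) := by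
            rw [div_le_iff₀ hkR]; nlinarith
          have h5 : (1 - 1/(k:ℝ)) * (f OPT - f (G n))
              = (f OPT - f (G n)) - (f OPT - f (G n)) / (k:ℝ) := by
            field_simp
          linarith
        calc f OPT - f (G (n+1)) ≤ (1 - 1/(k:ℝ)) * (f OPT - f (G n)) := hdelta
          _ ≤ (1 - 1/(k:ℝ)) * ((1 - 1/(k:ℝ))^n * f OPT) :=
              mul_le_mul_of_nonneg_left ihn hbase
          _ = (1 - 1/(k:ℝ))^(n+1) * f OPT := by ring
    have hpow : (1 - 1/(k:ℝ))^k ≤ Real.exp (-1) := by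
      have h1 : 1 - 1/(k:ℝ) ≤ Real.exp (-(1/(k:ℝ))) := by
        have := Real.add_one_le_exp (-(1/(k:ℝ)))
        linarith
      calc (1 - 1/(k:ℝ))^k ≤ (Real.exp (-(1/(k:ℝ))))^k :=
            pow_le_pow_left₀ hbase h1 k
        _ = Real.exp ((k:ℝ) * (-(1/(k:ℝ)))) := (Real.exp_nat_mul _ k).symm
        _ = Real.exp (-1) := by
            congr 1
            field_simp
    have hfin : f OPT - f (G k) ≤ Real.exp (-1) * f OPT := by
      calc f OPT - f (G k) ≤ (1 - 1/(k:ℝ))^k * f OPT := main k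
        _ ≤ Real.exp (-1) * f OPT := mul_le_mul_of_nonneg_right hpow hfOPT
    have hexp : Real.exp (-1) = 1 / Real.exp 1 := by
      rw [Real.exp_neg]; exact (one_div _).symm
    rw [hexp] at hfin
    linarith
end

section
/- Let V be a finite ground set and f a monotone submodular function on subsets of V with f(∅) = 0 and nonnegative values. Let (G_i) be a greedy sequence for f (G_0 = ∅ and G_{i+1} = G_i ∪ {x} with x ∈ V maximizing the marginal gain). Then for every subset OPT ⊆ V with |OPT| ≤ k and every i, f(OPT) − f(G_{i+1}) ≤ (1 − 1/k)·(f(OPT) − f(G_i)). -/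
/-- Telescoping bound: the gain of adding a whole set is at most the sum of
individual marginal gains. -/
lemma submod_union_bound
    {α : Type*} [DecidableEq α] (V : Finset α) (f : Finset α → ℝ)
    (hsubmod : ∀ S T : Finset α, S ⊆ T → T ⊆ V → ∀ x ∈ V, x ∉ T →
      f (insert x T) - f T ≤ f (insert x S) - f S) :
    ∀ (T S : Finset α), S ⊆ V → T ⊆ V →
      f (S ∪ T) - f S ≤ ∑ x ∈ T \ S, (f (insert x S) - f S) := by
  intro T
  induction T using Finset.induction_on with
  | empty => intro S hS _; simp
  | @insert a T' ha ih =>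
    intro S hS hT
    have hT' : T' ⊆ V := fun x hx => hT (Finset.mem_insert_of_mem hx)
    have haV : a ∈ V := hT (Finset.mem_insert_self a T')
    by_cases haS : a ∈ S
    · have h1 : S ∪ insert a T' = S ∪ T' := by
        ext y; simp only [Finset.mem_union, Finset.mem_insert]
        constructor
        · rintro (h | rfl | h) <;> tauto
        · tauto
      have h2 : insert a T' \ S = T' \ S := Finset.insert_sdiff_of_mem _ haS
      rw [h1, h2]; exact ih S hS hT'
    · have hsets : insert a T' \ S = insert a (T' \ S) := by
        ext y
        simp only [Finset.mem_sdiff, Finset.mem_insert]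
        constructor
        · rintro ⟨(rfl | h), hy⟩ <;> tauto
        · rintro (rfl | ⟨h1, h2⟩) <;> tauto
      have hna : a ∉ T' \ S := fun h => ha (Finset.mem_sdiff.mp h).1
      rw [hsets, Finset.sum_insert hna]
      have hu : S ∪ insert a T' = insert a (S ∪ T') := Finset.union_insert a S T'
      have haST : a ∉ S ∪ T' := by simp [haS, ha]
      have hSTV : S ∪ T' ⊆ V := Finset.union_subset hS hT'
      have hsub := hsubmod S (S ∪ T') Finset.subset_union_left hSTV a haV haST
      have := ih S hS hT'
      rw [hu]
      linarith

/-- **One-step contraction for greedy submodular maximization.**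
For a monotone, submodular, nonnegative `f` with `f ∅ = 0` and a greedy sequence `G`,
for every `OPT ⊆ V` with `|OPT| ≤ k` and every `i`,
`f OPT - f (G (i+1)) ≤ (1 - 1/k)·(f OPT - f (G i))`. -/
theorem greedy_contraction_step
    {α : Type*} [DecidableEq α] (V : Finset α) (f : Finset α → ℝ)
    (hnonneg : ∀ S : Finset α, S ⊆ V → 0 ≤ f S)
    (hmono : ∀ S T : Finset α, S ⊆ T → T ⊆ V → f S ≤ f T)
    (hsubmod : ∀ S T : Finset α, S ⊆ T → T ⊆ V → ∀ x ∈ V, x ∉ T →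
      f (insert x T) - f T ≤ f (insert x S) - f S)
    (hempty : f ∅ = 0)
    (G : ℕ → Finset α)
    (hG0 : G 0 = ∅)
    (hGstep : ∀ i : ℕ, ∃ x ∈ V, G (i + 1) = insert x (G i) ∧
      ∀ y ∈ V, f (insert y (G i)) - f (G i) ≤ f (insert x (G i)) - f (G i))
    (k : ℕ) (OPT : Finset α) (hOPT : OPT ⊆ V) (hcard : OPT.card ≤ k) :
    ∀ i : ℕ, f OPT - f (G (i + 1)) ≤ (1 - 1 / (k : ℝ)) * (f OPT - f (G i)) := by
  -- G i ⊆ V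
  have hGV : ∀ i, G i ⊆ V := by
    intro i
    induction i with
    | zero => simp [hG0]
    | succ n ihn =>
      obtain ⟨x, hxV, hGeq, _⟩ := hGstep n
      rw [hGeq]
      exact Finset.insert_subset hxV ihn
  intro i
  obtain ⟨x, hxV, hGeq, hmax⟩ := hGstep i
  set g : ℝ := f (insert x (G i)) - f (G i) with hg
  have hGiV := hGV i
  have hGi1V : insert x (G i) ⊆ V := Finset.insert_subset hxV hGiV
  -- g ≥ 0
  have hg0 : 0 ≤ g := by
    have := hmono (G i) (insert x (G i)) (Finset.subset_insert _ _) hGi1V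
    linarith
  -- f OPT - f (G i) ≤ k * g
  have hkey : f OPT - f (G i) ≤ (OPT \ G i).card * g := by
    have h1 : f OPT ≤ f (G i ∪ OPT) :=
      hmono OPT (G i ∪ OPT) Finset.subset_union_right (Finset.union_subset hGiV hOPT)
    have h2 := submod_union_bound V f hsubmod OPT (G i) hGiV hOPT
    have h3 : ∑ y ∈ OPT \ G i, (f (insert y (G i)) - f (G i)) ≤ (OPT \ G i).card * g := by
      calc ∑ y ∈ OPT \ G i, (f (insert y (G i)) - f (G i))
          ≤ ∑ _y ∈ OPT \ G i, g := by
            apply Finset.sum_le_sum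
            intro y hy
            exact hmax y (hOPT (Finset.mem_sdiff.mp hy).1)
        _ = (OPT \ G i).card * g := by
            rw [Finset.sum_const, nsmul_eq_mul]
    linarith
  have hcardle : ((OPT \ G i).card : ℝ) ≤ (k : ℝ) := by
    exact_mod_cast le_trans (Finset.card_le_card (Finset.sdiff_subset)) hcard
  have hkg : f OPT - f (G i) ≤ (k : ℝ) * g := by
    calc f OPT - f (G i) ≤ (OPT \ G i).card * g := hkey
      _ ≤ (k : ℝ) * g := mul_le_mul_of_nonneg_right hcardle hg0
  rw [hGeq]
  by_cases hk : k = 0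
  · -- then OPT = ∅
    subst hk
    have : OPT = ∅ := Finset.card_eq_zero.mp (Nat.le_zero.mp hcard)
    subst this
    simp only [hempty, Nat.cast_zero, div_zero]
    linarith
  · have hkpos : (0 : ℝ) < (k : ℝ) := by exact_mod_cast Nat.pos_of_ne_zero hk
    have : (f OPT - f (G i)) / k ≤ g := by
      rw [div_le_iff₀ hkpos]
      linarith [hkg]
    have expand : (1 - 1 / (k : ℝ)) * (f OPT - f (G i))
        = (f OPT - f (G i)) - (f OPT - f (G i)) / k := by ring
    rw [expand]
    show f OPT - f (insert x (G i)) ≤ _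
    have : f (insert x (G i)) = f (G i) + g := by rw [hg]; ring
    linarith
end

section
/- Let V be a finite ground set and f a monotone submodular function on subsets of V with f(∅) = 0 and nonnegative values. Let (G_i) be a greedy sequence for f (G_0 = ∅ and G_{i+1} = G_i ∪ {x} with x ∈ V maximizing the marginal gain). Then for every subset OPT ⊆ V with |OPT| ≤ k and every ℓ ≥ 0, f(G_ℓ) ≥ (1 − (1 − 1/k)^ℓ)·f(OPT). -/
/-- **ℓ-step greedy guarantee.**
For a monotone, submodular, nonnegative `f` with `f ∅ = 0` and a greedy sequence `G`,
for every `OPT ⊆ V` with `|OPT| ≤ k` and every `ℓ ≥ 0`,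
`f (G ℓ) ≥ (1 - (1 - 1/k)^ℓ)·f OPT`. -/
theorem greedy_ell_step_guarantee
    {α : Type*} [DecidableEq α] (V : Finset α) (f : Finset α → ℝ)
    (hnonneg : ∀ S : Finset α, S ⊆ V → 0 ≤ f S)
    (hmono : ∀ S T : Finset α, S ⊆ T → T ⊆ V → f S ≤ f T)
    (hsubmod : ∀ S T : Finset α, S ⊆ T → T ⊆ V → ∀ x ∈ V, x ∉ T →
      f (insert x T) - f T ≤ f (insert x S) - f S)
    (hempty : f ∅ = 0)
    (G : ℕ → Finset α)
    (hG0 : G 0 = ∅)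
    (hGstep : ∀ i : ℕ, ∃ x ∈ V, G (i + 1) = insert x (G i) ∧
      ∀ y ∈ V, f (insert y (G i)) - f (G i) ≤ f (insert x (G i)) - f (G i))
    (k : ℕ) (OPT : Finset α) (hOPT : OPT ⊆ V) (hcard : OPT.card ≤ k) :
    ∀ ℓ : ℕ, (1 - (1 - 1 / (k : ℝ)) ^ ℓ) * f OPT ≤ f (G ℓ) := by
  have hGsubV : ∀ i, G i ⊆ V := by
    intro i
    induction i with
    | zero => simp [hG0]
    | succ n ih =>
      obtain ⟨x, hxV, hx, _⟩ := hGstep n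
      rw [hx]; exact Finset.insert_subset hxV ih
  intro ℓ
  rcases Nat.eq_zero_or_pos k with hk | hk
  · subst hk
    have hO : OPT = ∅ := Finset.card_eq_zero.mp (Nat.le_zero.mp hcard)
    have : (1 - (1 - 1 / ((0:ℕ) : ℝ)) ^ ℓ) * f OPT = 0 := by
      norm_num
    rw [this]
    exact hnonneg _ (hGsubV ℓ)
  · have hk0 : (0:ℝ) < k := by exact_mod_cast hk
    have hk1 : (1:ℝ) ≤ k := by exact_mod_cast hk
    have hfac : (0:ℝ) ≤ 1 - 1 / k := by
      have : (1:ℝ) / k ≤ 1 := by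
        rw [div_le_one hk0]; exact hk1
      linarith
    -- subadditivity of marginals
    have hsum : ∀ (A : Finset α), A ⊆ V → ∀ (S : Finset α), S ⊆ V →
        f (A ∪ S) ≤ f S + ∑ x ∈ A, (f (insert x S) - f S) := by
      intro A
      induction A using Finset.induction_on with
      | empty => intro _ S _; simp
      | @insert a A ha ih =>
        intro hAV S hSV
        have haV : a ∈ V := hAV (Finset.mem_insert_self a A)
        have hAV' : A ⊆ V := (Finset.insert_subset_iff.mp hAV).2
        rw [Finset.sum_insert ha, Finset.insert_union]
        by_cases haS : a ∈ A ∪ S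
        · rw [Finset.insert_eq_self.mpr haS]
          have h1 := ih hAV' S hSV
          have h2 : 0 ≤ f (insert a S) - f S := by
            have := hmono S (insert a S) (Finset.subset_insert a S)
              (Finset.insert_subset haV hSV)
            linarith
          linarith
        · have hsub := hsubmod S (A ∪ S) Finset.subset_union_right
            (Finset.union_subset hAV' hSV) a haV haS
          have h1 := ih hAV' S hSV
          linarith
    -- per-step gain bound
    have hstep : ∀ i, f OPT - f (G i) ≤ (k : ℝ) * (f (G (i+1)) - f (G i)) := by
      intro i
      obtain ⟨x, hxV, hx, hmax⟩ := hGstep i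
      have hg0 : 0 ≤ f (G (i+1)) - f (G i) := by
        rw [hx]
        have := hmono (G i) (insert x (G i)) (Finset.subset_insert _ _)
          (Finset.insert_subset hxV (hGsubV i))
        linarith
      have h1 : f OPT ≤ f (OPT ∪ G i) :=
        hmono _ _ Finset.subset_union_left (Finset.union_subset hOPT (hGsubV i))
      have h2 := hsum OPT hOPT (G i) (hGsubV i)
      have h3 : ∑ y ∈ OPT, (f (insert y (G i)) - f (G i)) ≤
          OPT.card • (f (G (i+1)) - f (G i)) := by
        apply Finset.sum_le_card_nsmul
        intro y hy
        rw [hx]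
        exact hmax y (hOPT hy)
      rw [nsmul_eq_mul] at h3
      have hcard' : (OPT.card : ℝ) ≤ k := by exact_mod_cast hcard
      nlinarith
    induction ℓ with
    | zero => simp [hG0, hempty]
    | succ n ih =>
      have hD : f OPT - f (G n) ≤ (1 - 1 / (k:ℝ)) ^ n * f OPT := by
        have heq : (1 - (1 - 1 / (k:ℝ)) ^ n) * f OPT
            = f OPT - (1 - 1 / (k:ℝ)) ^ n * f OPT := by ring
        linarith [ih, heq.symm.le]
      have hdiv : (f OPT - f (G n)) / k ≤ f (G (n+1)) - f (G n) := by
        rw [div_le_iff₀ hk0]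
        have := hstep n
        nlinarith
      have key : f OPT - f (G (n+1)) ≤ (1 - 1 / (k:ℝ)) * (f OPT - f (G n)) := by
        have heq : (1 - 1 / (k:ℝ)) * (f OPT - f (G n))
            = (f OPT - f (G n)) - (f OPT - f (G n)) / k := by ring
        linarith
      have hmul := mul_le_mul_of_nonneg_left hD hfac
      have heq2 : (1 - 1 / (k:ℝ)) * ((1 - 1 / (k:ℝ)) ^ n * f OPT)
          = (1 - 1 / (k:ℝ)) ^ (n+1) * f OPT := by ring
      have heq3 : (1 - (1 - 1 / (k:ℝ)) ^ (n+1)) * f OPT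
          = f OPT - (1 - 1 / (k:ℝ)) ^ (n+1) * f OPT := by ring
      linarith
end

section
/- Let Y be a finite set of points in a metric space, μ̂ any point, Ω(S, Y) = Σ_{x∈Y} min_{m∈S} d(x, m) for nonempty finite S, and Θ(μ, Y) = Ω({μ̂}, Y) − Ω({μ̂} ∪ μ, Y). Then Θ(·, Y) is submodular: for all finite sets S ⊆ T and every point x ∉ T, Θ(T ∪ {x}, Y) − Θ(T, Y) ≤ Θ(S ∪ {x}, Y) − Θ(S, Y). -/
open Finset

/-- The clustering cost `Ω(S, Y) = Σ_{x ∈ Y} min_{m ∈ S} d(x, m)` for a nonempty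
finite center set `S`. -/
noncomputable def omegaCost {α : Type*} [MetricSpace α]
    (Y : Finset α) (S : Finset α) (hS : S.Nonempty) : ℝ :=
  ∑ x ∈ Y, S.inf' hS (fun m => dist x m)

/-- The modified clustering objective
`Θ(μ, Y) = Ω({μ̂}, Y) - Ω({μ̂} ∪ μ, Y)` for a fixed phantom center `μ̂`. -/
noncomputable def theta {α : Type*} [MetricSpace α] [DecidableEq α]
    (muhat : α) (Y : Finset α) (μ : Finset α) : ℝ :=
  omegaCost Y {muhat} (singleton_nonempty muhat) -
    omegaCost Y (insert muhat μ) (insert_nonempty muhat μ)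

/-- **Submodularity (diminishing returns) of the modified clustering objective Θ.**
For all finite sets `S ⊆ T` and every point `x ∉ T`,
`Θ(T ∪ {x}, Y) - Θ(T, Y) ≤ Θ(S ∪ {x}, Y) - Θ(S, Y)`. -/
theorem theta_submodular {α : Type*} [MetricSpace α] [DecidableEq α]
    (Y : Finset α) (muhat : α) :
    ∀ S T : Finset α, S ⊆ T → ∀ x : α, x ∉ T →
      theta muhat Y (insert x T) - theta muhat Y T ≤
        theta muhat Y (insert x S) - theta muhat Y S := by
  intro S T hST x _
  unfold theta omegaCost
  have key : ∀ y : α,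
      (insert muhat T).inf' (insert_nonempty _ _) (fun m => dist y m) -
        (insert muhat (insert x T)).inf' (insert_nonempty _ _) (fun m => dist y m) ≤
      (insert muhat S).inf' (insert_nonempty _ _) (fun m => dist y m) -
        (insert muhat (insert x S)).inf' (insert_nonempty _ _) (fun m => dist y m) := by
    intro y
    simp only [Finset.insert_comm muhat x]
    rw [
      inf'_insert (insert_nonempty muhat T), inf'_insert (insert_nonempty muhat S)]
    set a := (insert muhat T).inf' (insert_nonempty _ _) (fun m => dist y m) with ha
    set b := (insert muhat S).inf' (insert_nonempty _ _) (fun m => dist y m) with hb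
    have hab : a ≤ b := by
      apply inf'_mono
      exact insert_subset_insert _ hST
    rcases le_total (dist y x) a with h | h
    · rw [min_eq_left h, min_eq_left (h.trans hab)]
      linarith
    · rw [min_eq_right h]
      have : min (dist y x) b ≤ b := min_le_right _ _
      linarith
  have h1 := Finset.sum_le_sum (s := Y) (fun y _ => key y)
  rw [Finset.sum_sub_distrib, Finset.sum_sub_distrib] at h1
  linarith
end

section
/- Let P be a finite set of at least two points in a metric space and let c ∈ P. Define σ = min_{x'∈P} Σ_{x∈P} d(x, x') and δ = min_{y∈P, y≠c} d(y, c). If m is a natural number with m·δ ≥ Σ_{x∈P} d(x, c) − σ, then for every y ∈ P, Σ_{x∈P} d(x, c) ≤ Σ_{x∈P} d(x, y) + m·d(c, y); that is, c is an optimal 1-median medoid of the multiset obtained from P by adding m extra copies of c. -/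
open Finset

/-- **Per-cluster copy-forcing estimate (non-strict).**
Let `P` be a finite set of at least two points of a metric space, `c ∈ P`,
`σ = min_{x' ∈ P} Σ_{x ∈ P} d(x, x')` and `δ = min_{y ∈ P, y ≠ c} d(y, c)`.
If `m·δ ≥ Σ_{x ∈ P} d(x, c) - σ`, then for every `y ∈ P`,
`Σ_{x ∈ P} d(x, c) ≤ Σ_{x ∈ P} d(x, y) + m·d(c, y)`: `c` is an optimal 1-median medoid
of the multiset obtained from `P` by adding `m` extra copies of `c`. -/
theorem copy_forcing_medoid {α : Type*} [MetricSpace α] [DecidableEq α]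
    (P : Finset α) (hP : 2 ≤ P.card) (c : α) (hc : c ∈ P)
    (σ δ : ℝ)
    (hσ : σ = P.inf' (Finset.card_pos.mp (by omega)) (fun x' => ∑ x ∈ P, dist x x'))
    (hδ : δ = (P.erase c).inf'
      (Finset.card_pos.mp (by rw [Finset.card_erase_of_mem hc]; omega))
      (fun y => dist y c))
    (m : ℕ) (hm : (∑ x ∈ P, dist x c) - σ ≤ (m : ℝ) * δ) :
    ∀ y ∈ P, (∑ x ∈ P, dist x c) ≤ (∑ x ∈ P, dist x y) + (m : ℝ) * dist c y := by
  intro y hy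
  by_cases hyc : y = c
  · subst hyc; simp
  · have hδle : δ ≤ dist c y := by
      rw [hδ, dist_comm]
      exact Finset.inf'_le _ (Finset.mem_erase.mpr ⟨hyc, hy⟩)
    have hσle : σ ≤ ∑ x ∈ P, dist x y := by
      rw [hσ]; exact Finset.inf'_le _ hy
    have : (m : ℝ) * δ ≤ (m : ℝ) * dist c y :=
      mul_le_mul_of_nonneg_left hδle (Nat.cast_nonneg m)
    linarith
end

section
/- Let X be a finite set of points in a metric space partitioned into nonempty well-separated clusters P_1, …, P_k (each P_i having at least two points), i.e., for all i ≠ j, all x, y ∈ P_i and all z ∈ P_j, d(x, y) < d(x, z). For each i choose c_i ∈ P_i, set σ_i = min_{x'∈P_i} Σ_{x∈P_i} d(x, x') and δ_i = min_{y∈P_i, y≠c_i} d(y, c_i), and let m_i = ⌈(Σ_{x∈P_i} d(x, c_i) − σ_i)/δ_i⌉. Let X' be the multiset consisting of m_i copies of c_i for each i, so |X'| = Σ_{i∈[k]} m_i ≤ Σ_{i∈[k]} |P_i|·⌈(Σ_{x∈P_i} d(x, c_i) − σ_i)/δ_i⌉. Then for every choice of candidate medoids y_1 ∈ P_1, …,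 y_k ∈ P_k, the k-median cost of {c_1, …, c_k} on the multiset X + X' is at most the k-median cost of {y_1, …, y_k} on X + X', where the k-median cost of a center set S is Σ_{x∈X+X'} min_{m∈S} d(x, m) counted with multiplicity. -/
open Finset

/-- The k-median cost of the (indexed) center set `{c 0, …, c (k-1)}` on a multiset `Q`,
counted with multiplicity: `Σ_{x ∈ Q} min_{j ∈ [k]} d(x, c j)`. -/
noncomputable def kmedCost {α : Type*} [MetricSpace α] {k : ℕ} (hk : 0 < k)
    (Q : Multiset α) (c : Fin k → α) : ℝ :=
  (Q.map fun x =>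
    (Finset.univ : Finset (Fin k)).inf' ⟨⟨0, hk⟩, Finset.mem_univ _⟩
      fun j => dist x (c j)).sum

/-- **Theorem 2 of the paper.**  Let `X` be a finite set partitioned into nonempty
well-separated clusters `P 1, …, P k` (each of size at least two), let `c i ∈ P i` be
adversarial centers, `σ i = min_{x' ∈ P i} Σ_{x ∈ P i} d(x, x')`,
`δ i = min_{y ∈ P i, y ≠ c i} d(y, c i)`, and
`m i = ⌈(Σ_{x ∈ P i} d(x, c i) - σ i) / δ i⌉`.  Let `X'` consist of `m i` copies of
`c i` for each `i`, so `|X'| = Σ_i m i ≤ Σ_i |P i|·⌈(Σ_{x ∈ P i} d(x, c i) - σ i)/δ i⌉.`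
Then for every choice of candidate medoids `y i ∈ P i`, the k-median cost of
`{c 1, …, c k}` on `X + X'` is at most that of `{y 1, …, y k}`. -/
theorem wellSeparated_adversarial_cost_bound
    {α : Type*} [MetricSpace α] [DecidableEq α]
    {k : ℕ} (hk : 0 < k)
    (X : Finset α) (P : Fin k → Finset α)
    (hPcard : ∀ i, 2 ≤ (P i).card)
    (hdisj : ∀ i j, i ≠ j → Disjoint (P i) (P j))
    (hpart : X = Finset.univ.biUnion P)
    (hsep : ∀ i j, i ≠ j → ∀ x ∈ P i, ∀ y ∈ P i, ∀ z ∈ P j, dist x y < dist x z)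
    (c : Fin k → α) (hc : ∀ i, c i ∈ P i)
    (σ δ : Fin k → ℝ)
    (hσ : ∀ i, σ i = (P i).inf' (Finset.card_pos.mp (by have := hPcard i; omega))
      (fun x' => ∑ x ∈ P i, dist x x'))
    (hδ : ∀ i, δ i = ((P i).erase (c i)).inf'
      (Finset.card_pos.mp
        (by rw [Finset.card_erase_of_mem (hc i)]; have := hPcard i; omega))
      (fun y => dist y (c i)))
    (m : Fin k → ℕ)
    (hm : ∀ i, m i = ⌈((∑ x ∈ P i, dist x (c i)) - σ i) / δ i⌉₊)
    (X' : Multiset α)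
    (hX' : X' = ∑ i : Fin k, Multiset.replicate (m i) (c i)) :
    Multiset.card X' = ∑ i, m i ∧
    (∑ i, m i) ≤
      ∑ i, (P i).card * ⌈((∑ x ∈ P i, dist x (c i)) - σ i) / δ i⌉₊ ∧
    ∀ y : Fin k → α, (∀ i, y i ∈ P i) →
      kmedCost hk (X.val + X') c ≤ kmedCost hk (X.val + X') y := by
  -- nearest-center identity
  have key : ∀ (w : Fin k → α), (∀ i, w i ∈ P i) → ∀ i, ∀ x ∈ P i,
      ((Finset.univ : Finset (Fin k)).inf' ⟨⟨0, hk⟩, Finset.mem_univ _⟩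
        fun j => dist x (w j)) = dist x (w i) := by
    intro w hw i x hx
    apply le_antisymm (Finset.inf'_le _ (mem_univ i))
    apply Finset.le_inf'
    intro j _
    by_cases h : j = i
    · subst h; rfl
    · exact le_of_lt (hsep i j (fun e => h e.symm) x hx (w i) (hw i) (w j) (hw j))
  -- cost decomposition
  have hcost : ∀ (w : Fin k → α), (∀ i, w i ∈ P i) →
      kmedCost hk (X.val + X') w =
        (∑ i, ∑ x ∈ P i, dist x (w i)) + ∑ i, (m i : ℝ) * dist (c i) (w i) := by
    intro w hw
    set g : α → ℝ := fun x =>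
      (Finset.univ : Finset (Fin k)).inf' ⟨⟨0, hk⟩, Finset.mem_univ _⟩
        fun j => dist x (w j) with hg
    have h1 : kmedCost hk (X.val + X') w = (X.val.map g).sum + (X'.map g).sum := by
      rw [kmedCost, Multiset.map_add, Multiset.sum_add]
    have h2 : (X.val.map g).sum = ∑ x ∈ X, g x := rfl
    have h3 : ∑ x ∈ X, g x = ∑ i, ∑ x ∈ P i, dist x (w i) := by
      rw [hpart, Finset.sum_biUnion (fun i _ j _ hij => hdisj i j hij)]
      exact Finset.sum_congr rfl fun i _ =>
        Finset.sum_congr rfl fun x hx => key w hw i x hx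
    have h4 : (X'.map g).sum = ∑ i, (m i : ℝ) * dist (c i) (w i) := by
      rw [hX']
      rw [show Multiset.map g (∑ i : Fin k, Multiset.replicate (m i) (c i))
          = ∑ i : Fin k, Multiset.map g (Multiset.replicate (m i) (c i)) from
        map_sum (Multiset.mapAddMonoidHom g) _ Finset.univ]
      rw [show (∑ i : Fin k, Multiset.map g (Multiset.replicate (m i) (c i))).sum
          = ∑ i : Fin k, (Multiset.map g (Multiset.replicate (m i) (c i))).sum from
        map_sum Multiset.sumAddMonoidHom _ Finset.univ]
      simp only [Multiset.map_replicate, Multiset.sum_replicate, nsmul_eq_mul]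
      exact Finset.sum_congr rfl fun i _ => by
        rw [show g (c i) = dist (c i) (w i) from key w hw i (c i) (hc i)]
    rw [h1, h2, h3, h4]
  refine ⟨?_, ?_, ?_⟩
  · rw [hX']
    rw [show Multiset.card (∑ i : Fin k, Multiset.replicate (m i) (c i))
        = ∑ i : Fin k, Multiset.card (Multiset.replicate (m i) (c i)) from
      map_sum (⟨⟨Multiset.card, Multiset.card_zero⟩, Multiset.card_add⟩ :
        Multiset α →+ ℕ) _ Finset.univ]
    simp [Multiset.card_replicate]
  · refine Finset.sum_le_sum fun i _ => ?_
    rw [hm i]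
    exact Nat.le_mul_of_pos_left _ (by have := hPcard i; omega)
  · intro y hy
    rw [hcost c hc, hcost y hy]
    simp only [dist_self, mul_zero, Finset.sum_const_zero, add_zero]
    rw [← Finset.sum_add_distrib]
    refine Finset.sum_le_sum fun i _ => ?_
    -- per-cluster inequality
    by_cases hyc : y i = c i
    · rw [hyc]; simp
    · have hδpos : 0 < δ i := by
        rw [hδ i]
        rw [Finset.lt_inf'_iff]
        intro b hb
        exact dist_pos.mpr (Finset.ne_of_mem_erase hb)
      have hσle : σ i ≤ ∑ x ∈ P i, dist x (y i) := by
        rw [hσ i]; exact Finset.inf'_le _ (hy i)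
      have hδle : δ i ≤ dist (c i) (y i) := by
        rw [hδ i, dist_comm]
        exact Finset.inf'_le _ (Finset.mem_erase.mpr ⟨hyc, hy i⟩)
      have hmge : ((∑ x ∈ P i, dist x (c i)) - σ i) ≤ (m i : ℝ) * δ i := by
        rw [hm i]
        rw [← div_le_iff₀ hδpos] at *
        exact (Nat.le_ceil _)
      have : (m i : ℝ) * δ i ≤ (m i : ℝ) * dist (c i) (y i) :=
        mul_le_mul_of_nonneg_left hδle (Nat.cast_nonneg _)
      nlinarith [hσle, hmge, this]
end

section
/- Let X be a finite set of at least k ≥ 1 points in a metric space with |X| ≥ 2, and let c_1, …, c_k be k distinct points of X. Then there exists N ∈ ℕ such that for all m ≥ N, the set {c_1, …, c_k} is the unique minimizer of the k-median cost Σ_{x∈Q} min_{j∈[k]} d(x, s_j) (counted with multiplicity) over all k-element subsets {s_1, …, s_k} of X, where Q is the multiset obtained from X by adding m extra copies of each c_i. -/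
open Finset

/-- The k-median cost of a nonempty finite center set `S` on a multiset `Q`, counted
with multiplicity: `Σ_{x ∈ Q} min_{m ∈ S} d(x, m)`. -/
noncomputable def kmedCostS {α : Type*} [MetricSpace α]
    (Q : Multiset α) (S : Finset α) (hS : S.Nonempty) : ℝ :=
  (Q.map fun x => S.inf' hS fun m => dist x m).sum

private lemma map_sum_sum {α ι : Type*} (s : Finset ι) (g : ι → Multiset α) (f : α → ℝ) :
    ((∑ i ∈ s, g i).map f).sum = ∑ i ∈ s, ((g i).map f).sum := by
  classical
  induction s using Finset.induction_on with
  | empty => simp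
  | insert _ _ h ih => simp [Finset.sum_insert h, Multiset.map_add, ih]

/-- **Convergence of Algorithm 1 (point-mass forcing).**
Let `X` be a finite set of at least `k ≥ 1` points of a metric space with `|X| ≥ 2`, and
let `c 1, …, c k` be distinct points of `X`.  Then there is `N` such that for all
`m ≥ N`, the set `{c 1, …, c k}` is the unique minimizer of the k-median cost over all
`k`-element subsets of `X`, on the multiset obtained from `X` by adding `m` extra copies
of each `c i`. -/
theorem point_mass_forces_medoids
    {α : Type*} [MetricSpace α] [DecidableEq α]
    {k : ℕ} (hk : 1 ≤ k)
    (X : Finset α) (hX2 : 2 ≤ X.card) (hkX : k ≤ X.card)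
    (c : Fin k → α) (hcinj : Function.Injective c) (hcX : ∀ i, c i ∈ X) :
    ∃ N : ℕ, ∀ m : ℕ, N ≤ m →
      ∀ S : Finset α, S ⊆ X → ∀ hS : S.Nonempty, S.card = k →
        S ≠ Finset.image c Finset.univ →
        kmedCostS (X.val + ∑ i : Fin k, Multiset.replicate m (c i))
            (Finset.image c Finset.univ)
            ⟨c ⟨0, hk⟩, Finset.mem_image_of_mem c (Finset.mem_univ _)⟩ <
          kmedCostS (X.val + ∑ i : Fin k, Multiset.replicate m (c i)) S hS := by
  classical
  set C : Finset α := Finset.image c Finset.univ with hC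
  have hCcard : C.card = k := by
    rw [hC, Finset.card_image_of_injective _ hcinj, Finset.card_univ, Fintype.card_fin]
  have hCne : C.Nonempty := ⟨c ⟨0, hk⟩, Finset.mem_image_of_mem c (Finset.mem_univ _)⟩
  -- minimal positive distance in X
  have hpairs : ((X ×ˢ X).filter fun p => p.1 ≠ p.2).Nonempty := by
    obtain ⟨x, hx, y, hy, hxy⟩ := Finset.one_lt_card.mp hX2
    exact ⟨(x, y), by simp [Finset.mem_filter, Finset.mem_product, hx, hy, hxy]⟩
  set δ : ℝ := ((X ×ˢ X).filter fun p => p.1 ≠ p.2).inf' hpairs (fun p => dist p.1 p.2) with hδ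
  have hδpos : 0 < δ := by
    rw [hδ, Finset.lt_inf'_iff]
    rintro ⟨x, y⟩ hp
    simp only [Finset.mem_filter, Finset.mem_product] at hp
    exact dist_pos.mpr hp.2
  set A : ℝ := (X.val.map fun x => C.inf' hCne fun s => dist x s).sum with hA
  refine ⟨⌈A / δ⌉₊ + 1, ?_⟩
  intro m hm S hSX hS hScard hSne
  -- cost decomposition
  have hdecomp : ∀ (T : Finset α) (hT : T.Nonempty),
      kmedCostS (X.val + ∑ i : Fin k, Multiset.replicate m (c i)) T hT
        = (X.val.map fun x => T.inf' hT fun s => dist x s).sum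
          + ∑ i : Fin k, (m : ℝ) * (T.inf' hT fun s => dist (c i) s) := by
    intro T hT
    rw [kmedCostS, Multiset.map_add, Multiset.sum_add, map_sum_sum]
    congr 1
    refine Finset.sum_congr rfl fun i _ => ?_
    rw [Multiset.map_replicate, Multiset.sum_replicate, nsmul_eq_mul]
  -- cost of C
  have hCzero : ∀ i : Fin k, (C.inf' hCne fun s => dist (c i) s) = 0 := by
    intro i
    refine le_antisymm ?_ (Finset.le_inf' _ _ fun s _ => dist_nonneg)
    have h := Finset.inf'_le (fun s => dist (c i) s)
      (Finset.mem_image_of_mem c (Finset.mem_univ i))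
    exact le_of_le_of_eq h (dist_self _)
  have hcostC : kmedCostS (X.val + ∑ i : Fin k, Multiset.replicate m (c i)) C hCne = A := by
    rw [hdecomp C hCne]
    simp [hCzero, hA]
  -- the adversarial center set misses some c i
  have hmiss : ∃ i : Fin k, c i ∉ S := by
    by_contra h
    push_neg at h
    have hsub : C ⊆ S := by
      intro x hx
      obtain ⟨i, _, rfl⟩ := Finset.mem_image.mp hx
      exact h i
    exact hSne (Finset.eq_of_subset_of_card_le hsub (by rw [hScard, hCcard])).symm
  obtain ⟨i₀, hi₀⟩ := hmiss
  have hinfS : δ ≤ S.inf' hS fun s => dist (c i₀) s := by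
    refine Finset.le_inf' _ _ fun s hs => ?_
    have hne : c i₀ ≠ s := fun h => hi₀ (h ▸ hs)
    have hmem : (c i₀, s) ∈ (X ×ˢ X).filter fun p => p.1 ≠ p.2 := by
      refine Finset.mem_filter.mpr ⟨Finset.mem_product.mpr ⟨hcX i₀, hSX hs⟩, ?_⟩
      exact hne
    exact Finset.inf'_le (fun p : α × α => dist p.1 p.2) hmem
  -- lower bound on the cost of S
  have hsum_ge : (m : ℝ) * δ ≤ ∑ i : Fin k, (m : ℝ) * (S.inf' hS fun s => dist (c i) s) := by
    calc (m : ℝ) * δ ≤ (m : ℝ) * (S.inf' hS fun s => dist (c i₀) s) := by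
          exact mul_le_mul_of_nonneg_left hinfS (Nat.cast_nonneg m)
      _ ≤ _ := by
          refine Finset.single_le_sum (f := fun i => (m : ℝ) * (S.inf' hS fun s => dist (c i) s))
            (fun i _ => ?_) (Finset.mem_univ i₀)
          exact mul_nonneg (Nat.cast_nonneg m) (Finset.le_inf' hS _ fun s _ => dist_nonneg)
  have hbase_nonneg : 0 ≤ (X.val.map fun x => S.inf' hS fun s => dist x s).sum := by
    refine Multiset.sum_nonneg fun r hr => ?_
    obtain ⟨x, _, rfl⟩ := Multiset.mem_map.mp hr
    exact Finset.le_inf' hS _ fun s _ => dist_nonneg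
  have hA_lt : A < (m : ℝ) * δ := by
    have h1 : A / δ ≤ (⌈A / δ⌉₊ : ℝ) := Nat.le_ceil _
    have h2 : ((⌈A / δ⌉₊ : ℝ) + 1) ≤ (m : ℝ) := by exact_mod_cast hm
    have h3 : A ≤ (⌈A / δ⌉₊ : ℝ) * δ := by
      have h4 := mul_le_mul_of_nonneg_right h1 hδpos.le
      rwa [div_mul_cancel₀ _ hδpos.ne'] at h4
    nlinarith
  have hfinal : kmedCostS (X.val + ∑ i : Fin k, Multiset.replicate m (c i)) S hS
      ≥ (m : ℝ) * δ := by
    rw [hdecomp S hS]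
    linarith [hsum_ge, hbase_nonneg]
  have hmain : kmedCostS (X.val + ∑ i : Fin k, Multiset.replicate m (c i)) C hCne
      < kmedCostS (X.val + ∑ i : Fin k, Multiset.replicate m (c i)) S hS := by
    rw [hcostC]
    linarith [hA_lt, hfinal]
  exact hmain
end
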